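/- arXiv:2305.08484 — 2 statements merged into one kernel-verified Lean document; each statement's English description precedes it below -/
import Mathlib

section
/- Let X be a complete metric space, φ1, φ2 : X → ℝ ∪ {+∞} lower semicontinuous, ε > 0, δ > 0 and x̄ ∈ dom φ1 ∩ dom φ2. Suppose x̄ is a quasiuniform ε-minimum of φ1+φ2 on B_δ(x̄) and φ1 and φ2 are bounded from below on B_δ(x̄). Then there exists ρ̄ ∈ (0,δ) such that for every ρ ∈ (ρ̄, δ) and every η > 0 there exist a number γ > 0 and points x̂1, x̂2 ∈ X satisfying: (i) max{d(x̂1,x̄), d(x̂2,x̄)} < ρ; (ii) d(x̂1,x̂2) < η; (iii) φ_γ(x̂1,x̂2) ≤ (φ1+φ2)(x̄); and (iv) for all u1, u2 ∈ B̄_ρ(x̄) with (u1,u2) ≠ (x̂1,x̂2), φ_γ(x̂1,x̂2) − φ_γ(u1,u2) < (2ε/δ) · max{d(u1,x̂1), d(u2,x̂2)}; where φ_γ(u1,u2) := φ1(u1) + φ2(u2) + γ d(u1,u2). -/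
open Metric Set Filter

noncomputable section

/-- `V` is an essentially interior subset of `U`. -/
def EssInt {X : Type*} [MetricSpace X] (U V : Set X) : Prop :=
  ∃ ρ > (0 : ℝ), ∀ v ∈ V, Metric.ball v ρ ⊆ U

/-- The uniform infimum `Λ°_W(φ1,φ2)` of the decoupled sum over `W`. -/
def lambdaCirc {X : Type*} [MetricSpace X] (φ1 φ2 : X → EReal) (W : Set X) : EReal :=
  ⨆ η : {η : ℝ // 0 < η},
    sInf {v : EReal | ∃ x1 ∈ W, ∃ x2 ∈ W, dist x1 x2 < η.1 ∧ v = φ1 x1 + φ2 x2}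

/-- The quasiuniform infimum `Λ†_U(φ1,φ2)`. -/
def lambdaDag {X : Type*} [MetricSpace X] (φ1 φ2 : X → EReal) (U : Set X) : EReal :=
  ⨅ V : {V : Set X // EssInt U V}, lambdaCirc φ1 φ2 V.1

/-- `inf_U (φ1 + φ2)`. -/
def infSum {X : Type*} [MetricSpace X] (φ1 φ2 : X → EReal) (U : Set X) : EReal :=
  sInf {v : EReal | ∃ x ∈ U, v = φ1 x + φ2 x}

/-- `(φ1 ♦ φ2)_W (x1, x2)`. -/
def diamond {X : Type*} [MetricSpace X] (φ1 φ2 : X → EReal) (W : Set X) (x1 x2 : X) : EReal :=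
  sInf {v : EReal | ∃ x ∈ W,
    v = max (max ((dist x x1 : ℝ) : EReal) ((dist x x2 : ℝ) : EReal))
        (φ1 x + φ2 x - φ1 x1 - φ2 x2)}

/-- `Θ°_U(φ1,φ2)` (with the convention `sup ∅ = 0`). -/
def thetaCirc {X : Type*} [MetricSpace X] (φ1 φ2 : X → EReal) (U : Set X) : EReal :=
  ⨅ η : {η : ℝ // 0 < η},
    sSup (insert (0 : EReal)
      {v : EReal | ∃ x1 x2 : X, φ1 x1 < ⊤ ∧ x1 ∈ U ∧ φ2 x2 < ⊤ ∧ x2 ∈ U ∧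
        dist x1 x2 < η.1 ∧ v = diamond φ1 φ2 U x1 x2})

/-- `Θ†_{U,W}(φ1,φ2)`: as `Θ†_U`, but with the `♦`-expression taken over `W`. -/
def thetaDagW {X : Type*} [MetricSpace X] (φ1 φ2 : X → EReal) (U W : Set X) : EReal :=
  ⨆ V : {V : Set X // EssInt U V}, ⨅ η : {η : ℝ // 0 < η},
    sSup (insert (0 : EReal)
      {v : EReal | ∃ x1 x2 : X, φ1 x1 < ⊤ ∧ x1 ∈ V.1 ∧ φ2 x2 < ⊤ ∧ x2 ∈ V.1 ∧
        dist x1 x2 < η.1 ∧ v = diamond φ1 φ2 W x1 x2})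

/-- `Θ†_U(φ1,φ2)` (with the convention `sup ∅ = 0`). -/
def thetaDag {X : Type*} [MetricSpace X] (φ1 φ2 : X → EReal) (U : Set X) : EReal :=
  thetaDagW φ1 φ2 U U

/-- Indicator function of a set, in the `ℝ ∪ {+∞}` sense. -/
def indFn {X : Type*} (Ω : Set X) : X → EReal := fun x =>
  haveI := Classical.propDecidable (x ∈ Ω)
  if x ∈ Ω then 0 else ⊤

/-- `Λ_U(φ1,φ2)`: the uniform infimum of `(φ1,φ2)` around `U`. -/
def lambdaFull {X : Type*} [MetricSpace X] (φ1 φ2 : X → EReal) (U : Set X) : EReal :=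
  ⨆ η : {η : ℝ // 0 < η}, ⨆ ε : {ε : ℝ // 0 < ε},
    sInf {v : EReal | ∃ x1 x2 : X,
      dist x1 x2 < η.1 ∧ Metric.infDist x1 U < ε.1 ∧ v = φ1 x1 + φ2 x2}

open Topology in
lemma evp {Y : Type*} [MetricSpace Y] [CompleteSpace Y]
    (F : Y → EReal) (hlsc : LowerSemicontinuous F)
    (m : ℝ) (hm : ∀ y, (m : EReal) ≤ F y)
    (σ : ℝ) (hσ : 0 < σ) (y₀ : Y) (h₀ : F y₀ < ⊤) :
    ∃ y : Y, (F y + ((σ * dist y y₀ : ℝ) : EReal) ≤ F y₀) ∧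
      ∀ z : Y, z ≠ y → F y < F z + ((σ * dist z y : ℝ) : EReal) := by
  classical
  set S : Y → Set Y := fun p => {z | F z + ((σ * dist z p : ℝ) : EReal) ≤ F p} with hS
  have hmem : ∀ p, p ∈ S p := by
    intro p; simp [hS]
  have hnonneg : ∀ (z p : Y), (0 : EReal) ≤ ((σ * dist z p : ℝ) : EReal) := by
    intro z p; exact_mod_cast mul_nonneg hσ.le dist_nonneg
  have hFle : ∀ p z, z ∈ S p → F z ≤ F p := by
    intro p z hz
    exact le_trans (le_add_of_nonneg_right (hnonneg z p)) hz
  have hne_bot : ∀ z : Y, F z ≠ ⊥ := fun z => (lt_of_lt_of_le (EReal.bot_lt_coe m) (hm z)).ne'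
  have htrans : ∀ p q z, q ∈ S p → z ∈ S q → z ∈ S p := by
    intro p q z hq hz
    have hd : σ * dist z p ≤ σ * dist z q + σ * dist q p := by
      have := dist_triangle z q p; nlinarith
    calc F z + ((σ * dist z p : ℝ) : EReal)
        ≤ F z + ((σ * dist z q + σ * dist q p : ℝ) : EReal) := by
          exact add_le_add_right (EReal.coe_le_coe_iff.mpr hd) _
      _ = (F z + ((σ * dist z q : ℝ) : EReal)) + ((σ * dist q p : ℝ) : EReal) := by
          rw [EReal.coe_add, add_assoc]
      _ ≤ F q + ((σ * dist q p : ℝ) : EReal) := add_le_add_left hz _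
      _ ≤ F p := hq
  -- key existence of almost-minimizers
  have hkey : ∀ (n : ℕ) (p : {p : Y // F p < ⊤}), ∃ q : {p : Y // F p < ⊤},
      q.1 ∈ S p.1 ∧ F q.1 ≤ sInf (F '' S p.1) + (((1/2 : ℝ)^(n+1) : ℝ) : EReal) := by
    intro n p
    have hinf_le : sInf (F '' S p.1) ≤ F p.1 := sInf_le ⟨p.1, hmem p.1, rfl⟩
    have hinf_ne_top : sInf (F '' S p.1) ≠ ⊤ := (lt_of_le_of_lt hinf_le p.2).ne
    have hinf_ne_bot : sInf (F '' S p.1) ≠ ⊥ := by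
      refine ne_of_gt (lt_of_lt_of_le (EReal.bot_lt_coe m) (le_sInf ?_))
      rintro v ⟨z, _, rfl⟩; exact hm z
    obtain ⟨r, hr⟩ : ∃ r : ℝ, sInf (F '' S p.1) = (r : EReal) :=
      ⟨_, (EReal.coe_toReal hinf_ne_top hinf_ne_bot).symm⟩
    have hlt : sInf (F '' S p.1) < sInf (F '' S p.1) + (((1/2 : ℝ)^(n+1) : ℝ) : EReal) := by
      rw [hr, ← EReal.coe_add]
      exact_mod_cast lt_add_of_pos_right r (by positivity)
    obtain ⟨v, ⟨q, hqS, rfl⟩, hv⟩ := sInf_lt_iff.mp hlt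
    exact ⟨⟨q, lt_of_le_of_lt (hFle p.1 q hqS) p.2⟩, hqS, hv.le⟩
  choose next hnext1 hnext2 using hkey
  let seq : ℕ → {p : Y // F p < ⊤} := fun n => Nat.rec ⟨y₀, h₀⟩ (fun k ih => next k ih) n
  set u : ℕ → Y := fun n => (seq n).1 with hu
  have hu0 : u 0 = y₀ := rfl
  have hA : ∀ n, u (n+1) ∈ S (u n) := fun n => hnext1 n (seq n)
  have hB : ∀ n, F (u (n+1)) ≤ sInf (F '' S (u n)) + (((1/2 : ℝ)^(n+1) : ℝ) : EReal) :=
    fun n => hnext2 n (seq n)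
  have hchain : ∀ n k, u (n+k) ∈ S (u n) := by
    intro n k; induction k with
    | zero => exact hmem (u n)
    | succ k ih => exact htrans (u n) (u (n+k)) (u (n+k+1)) ih (hA (n+k))
  have hchain' : ∀ {n m : ℕ}, n ≤ m → u m ∈ S (u n) := by
    intro n m hnm; obtain ⟨k, rfl⟩ := le_iff_exists_add.mp hnm; exact hchain n k
  have htop : ∀ n, F (u n) ≠ ⊤ := fun n => (seq n).2.ne
  -- real values
  have hreal : ∀ n, F (u n) = ((F (u n)).toReal : EReal) :=
    fun n => (EReal.coe_toReal (htop n) (hne_bot (u n))).symm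
  -- diameter bound
  have hdiam : ∀ n, ∀ z ∈ S (u (n+1)), σ * dist z (u (n+1)) ≤ (1/2 : ℝ)^(n+1) := by
    intro n z hz
    have hz' : z ∈ S (u n) := htrans (u n) (u (n+1)) z (hA n) hz
    have hzt : F z ≠ ⊤ := (lt_of_le_of_lt (hFle _ _ hz) (seq (n+1)).2).ne
    have hzr : F z = ((F z).toReal : EReal) := (EReal.coe_toReal hzt (hne_bot z)).symm
    set b := (F z).toReal
    set a := (F (u (n+1))).toReal
    have h1 : F z + ((σ * dist z (u (n+1)) : ℝ) : EReal) ≤ F (u (n+1)) := hz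
    rw [hzr, hreal (n+1), ← EReal.coe_add, EReal.coe_le_coe_iff] at h1
    have h2 : F (u (n+1)) ≤ F z + (((1/2 : ℝ)^(n+1) : ℝ) : EReal) := by
      exact le_trans (hB n) (add_le_add_left (sInf_le (Set.mem_image_of_mem F hz')) _)
    rw [hzr, hreal (n+1), ← EReal.coe_add, EReal.coe_le_coe_iff] at h2
    linarith
  have hdist : ∀ n m, n + 1 ≤ m → σ * dist (u m) (u (n+1)) ≤ (1/2 : ℝ)^(n+1) :=
    fun n m hnm => hdiam n (u m) (hchain' hnm)
  -- Cauchy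
  have hcauchy : CauchySeq u := by
    rw [Metric.cauchySeq_iff']
    intro e he
    obtain ⟨j, hj⟩ : ∃ j : ℕ, (1/2 : ℝ)^j < σ * e :=
      exists_pow_lt_of_lt_one (by positivity) (by norm_num)
    refine ⟨j + 1, fun n hn => ?_⟩
    rcases eq_or_lt_of_le hn with h | h'
    · simp [← h, he]
    · have h : j + 1 ≤ n := h'.le
      have := hdist j n h
      have : σ * dist (u n) (u (j+1)) < σ * e := lt_of_le_of_lt this (by
        calc (1/2:ℝ)^(j+1) ≤ (1/2:ℝ)^j := by
              apply pow_le_pow_of_le_one <;> norm_num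
         _ < σ * e := hj)
      exact lt_of_mul_lt_mul_left this hσ.le
  obtain ⟨y, hy⟩ := cauchySeq_tendsto_of_complete hcauchy
  -- y belongs to every S (u n)
  have hyS : ∀ n, y ∈ S (u n) := by
    intro n
    by_cases hyn : y = u n
    · rw [hyn]; exact hmem (u n)
    by_contra hcon
    have hcon' : (F (u n)) < F y + ((σ * dist y (u n) : ℝ) : EReal) := not_le.mp hcon
    have hdyn : 0 < dist y (u n) := dist_pos.mpr hyn
    set rn := (F (u n)).toReal
    have hlt : ((rn - σ * dist y (u n) : ℝ) : EReal) < F y := by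
      by_contra hge
      have hge' : F y ≤ ((rn - σ * dist y (u n) : ℝ) : EReal) := not_lt.mp hge
      have : F y + ((σ * dist y (u n) : ℝ) : EReal) ≤ (rn : EReal) := by
        calc F y + ((σ * dist y (u n) : ℝ) : EReal)
            ≤ ((rn - σ * dist y (u n) : ℝ) : EReal) + ((σ * dist y (u n) : ℝ) : EReal) :=
              add_le_add_left hge' _
          _ = (rn : EReal) := by rw [← EReal.coe_add]; norm_num
      rw [hreal n] at hcon'
      exact absurd (lt_of_lt_of_le hcon' this) (lt_irrefl _)
    obtain ⟨s, hs1, hs2⟩ := EReal.lt_iff_exists_real_btwn.mp hlt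
    have hs1' : rn - σ * dist y (u n) < s := EReal.coe_lt_coe_iff.mp hs1
    have hev1 : ∀ᶠ k in atTop, (s : EReal) < F (u k) :=
      hy.eventually (hlsc y s hs2)
    have htend : Tendsto (fun k => σ * dist (u k) (u n)) atTop (𝓝 (σ * dist y (u n))) :=
      (tendsto_const_nhds.mul (hy.dist tendsto_const_nhds))
    have hev2 : ∀ᶠ k in atTop, rn - s < σ * dist (u k) (u n) :=
      htend.eventually (eventually_gt_nhds (by linarith))
    have hev3 : ∀ᶠ k in atTop, n ≤ k := eventually_ge_atTop n
    obtain ⟨k, h1, h2, h3⟩ := (hev1.and (hev2.and hev3)).exists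
    have hk : u k ∈ S (u n) := hchain' h3
    have hk' : F (u k) + ((σ * dist (u k) (u n) : ℝ) : EReal) ≤ F (u n) := hk
    rw [hreal k, hreal n, ← EReal.coe_add, EReal.coe_le_coe_iff] at hk'
    have hsk : s < (F (u k)).toReal := by
      rw [hreal k] at h1; exact_mod_cast h1
    linarith [h2]
  refine ⟨y, hyS 0, ?_⟩
  intro z hzy
  by_contra hcon
  have hzS : ∀ n, z ∈ S (u n) := by
    intro n
    exact htrans (u n) y z (hyS n) (not_lt.mp hcon)
  have hzd : ∀ n, dist z (u (n+1)) ≤ (1/2 : ℝ)^(n+1) / σ := by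
    intro n
    have := hdiam n z (hzS (n+1))
    rw [le_div_iff₀ hσ]; linarith
  have hzy0 : dist z y ≤ 0 := by
    have h1 : Tendsto (fun n => dist z (u (n+1))) atTop (𝓝 (dist z y)) :=
      (tendsto_const_nhds.dist (hy.comp (tendsto_add_atTop_nat 1)))
    have h2 : Tendsto (fun n : ℕ => (1/2 : ℝ)^(n+1) / σ) atTop (𝓝 0) := by
      have : Tendsto (fun n : ℕ => (1/2 : ℝ)^(n+1)) atTop (𝓝 0) :=
        (tendsto_pow_atTop_nhds_zero_of_lt_one (by norm_num) (by norm_num)).comp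
          (tendsto_add_atTop_nat 1)
      simpa using this.div_const σ
    exact le_of_tendsto_of_tendsto' h1 h2 hzd
  exact hzy (dist_le_zero.mp hzy0)

/-- Primal necessary conditions for a quasiuniform `ε`-minimum of `φ1 + φ2`. -/
theorem stmt18 {X : Type*} [MetricSpace X] [CompleteSpace X]
    (φ1 φ2 : X → EReal) (hbot1 : ∀ x, φ1 x ≠ ⊥) (hbot2 : ∀ x, φ2 x ≠ ⊥)
    (hlsc1 : LowerSemicontinuous φ1) (hlsc2 : LowerSemicontinuous φ2)
    (ε δ : ℝ) (hε : 0 < ε) (hδ : 0 < δ)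
    (x₀ : X) (hx₀1 : φ1 x₀ < ⊤) (hx₀2 : φ2 x₀ < ⊤)
    (hmin : φ1 x₀ + φ2 x₀ < lambdaDag φ1 φ2 (Metric.ball x₀ δ) + (ε : EReal))
    (hbd1 : ∃ m : ℝ, ∀ x ∈ Metric.ball x₀ δ, (m : EReal) ≤ φ1 x)
    (hbd2 : ∃ m : ℝ, ∀ x ∈ Metric.ball x₀ δ, (m : EReal) ≤ φ2 x) :
    ∃ ρ0 : ℝ, 0 < ρ0 ∧ ρ0 < δ ∧ ∀ ρ : ℝ, ρ0 < ρ → ρ < δ → ∀ η : ℝ, 0 < η →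
      ∃ γ : ℝ, 0 < γ ∧ ∃ xh1 xh2 : X,
        max (dist xh1 x₀) (dist xh2 x₀) < ρ ∧
        dist xh1 xh2 < η ∧
        φ1 xh1 + φ2 xh2 + ((γ * dist xh1 xh2 : ℝ) : EReal) ≤ φ1 x₀ + φ2 x₀ ∧
        ∀ u1 ∈ Metric.closedBall x₀ ρ, ∀ u2 ∈ Metric.closedBall x₀ ρ,
          (u1, u2) ≠ (xh1, xh2) →
          (φ1 xh1 + φ2 xh2 + ((γ * dist xh1 xh2 : ℝ) : EReal)) -
              (φ1 u1 + φ2 u2 + ((γ * dist u1 u2 : ℝ) : EReal)) <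
            ((2 * ε / δ * max (dist u1 xh1) (dist u2 xh2) : ℝ) : EReal) := by
  classical
  obtain ⟨m1, hm1⟩ := hbd1
  obtain ⟨m2, hm2⟩ := hbd2
  have hadd_ne_bot : ∀ a b : X, φ1 a + φ2 b ≠ ⊥ := by
    intro a b h
    rcases EReal.add_eq_bot_iff.mp h with h | h
    exacts [hbot1 a h, hbot2 b h]
  have hsum_ne_top : φ1 x₀ + φ2 x₀ ≠ ⊤ := (EReal.add_lt_top hx₀1.ne hx₀2.ne).ne
  set s := (φ1 x₀ + φ2 x₀).toReal with hsdef
  have hs : φ1 x₀ + φ2 x₀ = (s : EReal) :=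
    (EReal.coe_toReal hsum_ne_top (hadd_ne_bot x₀ x₀)).symm
  refine ⟨δ/2, by linarith, by linarith, ?_⟩
  intro ρ hρ1 hρ2 η hη
  have hρpos : 0 < ρ := by linarith
  set W := Metric.closedBall x₀ ρ with hWdef
  have hWsub : W ⊆ Metric.ball x₀ δ := fun x hx =>
    mem_ball.mpr (lt_of_le_of_lt (mem_closedBall.mp hx) hρ2)
  have hEss : EssInt (Metric.ball x₀ δ) W := by
    refine ⟨δ - ρ, by linarith, fun v hv x hx => ?_⟩
    have h1 : dist x v < δ - ρ := mem_ball.mp hx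
    have h2 : dist v x₀ ≤ ρ := mem_closedBall.mp hv
    have := dist_triangle x v x₀
    exact mem_ball.mpr (by linarith)
  have hlam : lambdaDag φ1 φ2 (Metric.ball x₀ δ) ≤ lambdaCirc φ1 φ2 W :=
    iInf_le (fun V : {V : Set X // EssInt (Metric.ball x₀ δ) V} => lambdaCirc φ1 φ2 V.1)
      ⟨W, hEss⟩
  rw [hs] at hmin
  have hmin' : (s : EReal) < lambdaCirc φ1 φ2 W + (ε : EReal) :=
    lt_of_lt_of_le hmin (add_le_add_left hlam _)
  -- extract η0
  obtain ⟨η0, hη0, hkey0⟩ : ∃ η0 > (0:ℝ), ∀ x1 ∈ W, ∀ x2 ∈ W, dist x1 x2 < η0 →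
      ((s - ε : ℝ) : EReal) < φ1 x1 + φ2 x2 := by
    by_contra hcon
    push_neg at hcon
    have hle : lambdaCirc φ1 φ2 W ≤ ((s - ε : ℝ) : EReal) := by
      rw [lambdaCirc]
      refine iSup_le ?_
      rintro ⟨η0, hη0⟩
      obtain ⟨x1, hx1, x2, hx2, hd, hv⟩ := hcon η0 hη0
      have hmem : (φ1 x1 + φ2 x2) ∈
          {v : EReal | ∃ x1 ∈ W, ∃ x2 ∈ W, dist x1 x2 < η0 ∧ v = φ1 x1 + φ2 x2} :=
        ⟨x1, hx1, x2, hx2, hd, rfl⟩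
      exact le_trans (sInf_le hmem) hv
    have h2 := lt_of_lt_of_le hmin' (add_le_add_left hle _)
    rw [← EReal.coe_add, EReal.coe_lt_coe_iff] at h2
    linarith
  set η' := min η η0 with hη'def
  have hη'pos : 0 < η' := lt_min hη hη0
  set γ := max 1 ((s - (m1 + m2) + 1) / η') with hγdef
  have hγ1 : (1:ℝ) ≤ γ := le_max_left _ _
  have hγpos : 0 < γ := lt_of_lt_of_le one_pos hγ1
  have hγη' : s - (m1 + m2) + 1 ≤ γ * η' := by
    have h1 : (s - (m1 + m2) + 1) / η' ≤ γ := le_max_right _ _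
    have h2 := mul_le_mul_of_nonneg_right h1 hη'pos.le
    rwa [div_mul_cancel₀ _ hη'pos.ne'] at h2
  -- the product space
  set K : Set (X × X) := W ×ˢ W with hKdef
  have hKclosed : IsClosed K := (Metric.isClosed_closedBall.prod Metric.isClosed_closedBall)
  haveI : CompleteSpace K := hKclosed.completeSpace_coe
  set F : K → EReal := fun y =>
    φ1 y.1.1 + φ2 y.1.2 + ((γ * dist y.1.1 y.1.2 : ℝ) : EReal) with hFdef
  have hF_ne_bot' : ∀ y : K, φ1 y.1.1 + φ2 y.1.2 + ((γ * dist y.1.1 y.1.2 : ℝ) : EReal) ≠ ⊥ := by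
    intro y h
    rcases EReal.add_eq_bot_iff.mp h with h | h
    exacts [hadd_ne_bot _ _ h, EReal.coe_ne_bot _ h]
  have hlscF : LowerSemicontinuous F := by
    have hc1 : Continuous (fun y : K => (y : X × X).1) := continuous_fst.comp continuous_subtype_val
    have hc2 : Continuous (fun y : K => (y : X × X).2) := continuous_snd.comp continuous_subtype_val
    have l1 : LowerSemicontinuous (fun y : K => φ1 (y : X × X).1) := hlsc1.comp hc1
    have l2 : LowerSemicontinuous (fun y : K => φ2 (y : X × X).2) := hlsc2.comp hc2
    have l12 : LowerSemicontinuous (fun y : K => φ1 (y : X × X).1 + φ2 (y : X × X).2) :=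
      l1.add' l2 (fun y => EReal.continuousAt_add (Or.inr (hbot2 _)) (Or.inl (hbot1 _)))
    have c3 : Continuous (fun y : K => ((γ * dist (y : X × X).1 (y : X × X).2 : ℝ) : EReal)) :=
      continuous_coe_real_ereal.comp (continuous_const.mul (hc1.dist hc2))
    exact l12.add' c3.lowerSemicontinuous
      (fun y => EReal.continuousAt_add (Or.inr (EReal.coe_ne_bot _)) (Or.inl (hadd_ne_bot _ _)))
  have hmK : ∀ y : K, ((m1 + m2 : ℝ) : EReal) ≤ F y := by
    intro y
    have h1 : (m1 : EReal) ≤ φ1 y.1.1 := hm1 _ (hWsub y.2.1)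
    have h2 : (m2 : EReal) ≤ φ2 y.1.2 := hm2 _ (hWsub y.2.2)
    have h3 : (0 : EReal) ≤ ((γ * dist y.1.1 y.1.2 : ℝ) : EReal) :=
      EReal.coe_nonneg.mpr (mul_nonneg hγpos.le dist_nonneg)
    calc ((m1 + m2 : ℝ) : EReal) = (m1 : EReal) + (m2 : EReal) := EReal.coe_add m1 m2
      _ ≤ φ1 y.1.1 + φ2 y.1.2 := add_le_add h1 h2
      _ ≤ F y := le_add_of_nonneg_right h3
  have hx₀W : x₀ ∈ W := mem_closedBall_self hρpos.le
  set y₀K : K := ⟨(x₀, x₀), ⟨hx₀W, hx₀W⟩⟩ with hy₀Kdef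
  have hFy₀ : F y₀K = (s : EReal) := by
    show φ1 x₀ + φ2 x₀ + ((γ * dist x₀ x₀ : ℝ) : EReal) = (s : EReal)
    rw [dist_self, mul_zero, hs]
    norm_num
  have hFy₀top : F y₀K < ⊤ := by rw [hFy₀]; exact EReal.coe_lt_top s
  -- lower bound on F over K
  have step7 : ∀ y : K, ((s - ε : ℝ) : EReal) < F y ∧
      (η' ≤ dist y.1.1 y.1.2 → ((s + 1 : ℝ) : EReal) ≤ F y) := by
    intro y
    have hbig : η' ≤ dist y.1.1 y.1.2 → ((s + 1 : ℝ) : EReal) ≤ F y := by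
      intro hd
      have h3 : γ * η' ≤ γ * dist y.1.1 y.1.2 := mul_le_mul_of_nonneg_left hd hγpos.le
      have h1 : ((m1 + m2 + γ * dist y.1.1 y.1.2 : ℝ) : EReal) ≤ F y := by
        have : ((m1 + m2 + γ * dist y.1.1 y.1.2 : ℝ) : EReal)
            = ((m1 + m2 : ℝ) : EReal) + ((γ * dist y.1.1 y.1.2 : ℝ) : EReal) := by
          rw [← EReal.coe_add]
        rw [this, EReal.coe_add]
        exact add_le_add (add_le_add (hm1 _ (hWsub y.2.1)) (hm2 _ (hWsub y.2.2))) le_rfl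
      refine le_trans ?_ h1
      exact EReal.coe_le_coe_iff.mpr (by linarith)
    constructor
    · rcases lt_or_ge (dist y.1.1 y.1.2) η' with hd | hd
      · have hk := hkey0 y.1.1 y.2.1 y.1.2 y.2.2 (lt_of_lt_of_le hd (min_le_right _ _))
        refine lt_of_lt_of_le hk (le_add_of_nonneg_right ?_)
        exact EReal.coe_nonneg.mpr (mul_nonneg hγpos.le dist_nonneg)
      · exact lt_of_lt_of_le (EReal.coe_lt_coe_iff.mpr (by linarith)) (hbig hd)
    · exact hbig
  set σ' := 2 * ε / δ with hσ'def
  have hσ'pos : 0 < σ' := by positivity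
  obtain ⟨y, hy1, hy2⟩ := evp F hlscF (m1 + m2) hmK σ' hσ'pos y₀K hFy₀top
  have hFy_le : F y ≤ (s : EReal) := by
    refine le_trans (le_add_of_nonneg_right ?_) (hFy₀ ▸ hy1)
    exact EReal.coe_nonneg.mpr (mul_nonneg hσ'pos.le dist_nonneg)
  have hFy_gt : ((s - ε : ℝ) : EReal) < F y := (step7 y).1
  have hFy_ne_top : F y ≠ ⊤ := (lt_of_le_of_lt hFy_le (EReal.coe_lt_top s)).ne
  have hFy_ne_bot : F y ≠ ⊥ := hF_ne_bot' y
  set t := (F y).toReal with htdef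
  have hFyt : F y = (t : EReal) := (EReal.coe_toReal hFy_ne_top hFy_ne_bot).symm
  have ht_le : t ≤ s := by rw [hFyt] at hFy_le; exact_mod_cast hFy_le
  have ht_gt : s - ε < t := by rw [hFyt] at hFy_gt; exact_mod_cast hFy_gt
  have hdisty : σ' * dist y y₀K < ε := by
    have h1 : F y + ((σ' * dist y y₀K : ℝ) : EReal) ≤ (s : EReal) := hFy₀ ▸ hy1
    rw [hFyt, ← EReal.coe_add, EReal.coe_le_coe_iff] at h1
    linarith
  have hdisty' : dist y y₀K < δ / 2 := by
    have h2 : dist y y₀K < ε / σ' := by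
      rw [lt_div_iff₀ hσ'pos]; linarith [hdisty]
    have h3 : ε / σ' = δ / 2 := by
      rw [hσ'def]; field_simp
    linarith [h2, h3.symm.le]
  have hdist_eq : dist y y₀K = max (dist y.1.1 x₀) (dist y.1.2 x₀) := by
    rw [Subtype.dist_eq, Prod.dist_eq]
  -- (ii)
  have hdist12 : dist y.1.1 y.1.2 < η' := by
    by_contra hd
    have := (step7 y).2 (not_lt.mp hd)
    have h2 : ((s + 1 : ℝ) : EReal) ≤ (s : EReal) := le_trans this hFy_le
    rw [EReal.coe_le_coe_iff] at h2
    linarith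
  refine ⟨γ, hγpos, y.1.1, y.1.2, ?_, lt_of_lt_of_le hdist12 (min_le_left _ _), ?_, ?_⟩
  · rw [← hdist_eq]; linarith [hdisty']
  · rw [hs]; exact hFy_le
  · intro u1 hu1 u2 hu2 hne
    set z : K := ⟨(u1, u2), ⟨hu1, hu2⟩⟩ with hzdef
    have hzne : z ≠ y := by
      intro h
      apply hne
      have h1 : (u1, u2) = (y : X × X) := congrArg Subtype.val h
      rw [h1]
    have hb := hy2 z hzne
    have hDzy : dist z y = max (dist u1 y.1.1) (dist u2 y.1.2) := by
      rw [Subtype.dist_eq, Prod.dist_eq]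
    by_cases hFz_top : F z = ⊤
    · have hFz' : φ1 u1 + φ2 u2 + ((γ * dist u1 u2 : ℝ) : EReal) = ⊤ := hFz_top
      show F y - (φ1 u1 + φ2 u2 + ((γ * dist u1 u2 : ℝ) : EReal)) < _
      rw [hFz', hFyt]
      rw [sub_eq_add_neg, EReal.neg_top, EReal.add_bot]
      exact EReal.bot_lt_coe _
    · have hFz_ne_bot : F z ≠ ⊥ := hF_ne_bot' z
      set w := (F z).toReal with hwdef
      have hFzw : F z = (w : EReal) := (EReal.coe_toReal hFz_top hFz_ne_bot).symm
      have hb' : t < w + σ' * dist z y := by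
        rw [hFyt, hFzw, ← EReal.coe_add, EReal.coe_lt_coe_iff] at hb
        exact hb
      show F y - F z < ((2 * ε / δ * max (dist u1 y.1.1) (dist u2 y.1.2) : ℝ) : EReal)
      rw [hFyt, hFzw, ← EReal.coe_sub, EReal.coe_lt_coe_iff]
      rw [hDzy] at hb'
      rw [← hσ'def]
      linarith
end
end

section
/- Let X be a complete metric space, φ1, φ2 : X → ℝ ∪ {+∞} lower semicontinuous and x̄ ∈ dom φ1 ∩ dom φ2 a quasiuniform stationary point of φ1+φ2. Then for every ε > 0 there exists ρ ∈ (0,ε) such that for every η > 0 there exist a number γ > 0 and points x̂1, x̂2 ∈ X satisfying: (i) max{d(x̂1,x̄), d(x̂2,x̄)} < ρ; (ii) d(x̂1,x̂2) < η; (iii) φ_γ(x̂1,x̂2) ≤ (φ1+φ2)(x̄); and (iv) for all u1, u2 ∈ B̄_ρ(x̄) with (u1,u2) ≠ (x̂1,x̂2), φ_γ(x̂1,x̂2) − φ_γ(u1,u2) < ε · max{d(u1,x̂1), d(u2,x̂2)}; where φ_γ(u1,u2) := φ1(u1) + φ2(u2) + γ d(u1,u2). -/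
open Metric Set Filter Topology

noncomputable section

theorem myEkeland {Y : Type*} [MetricSpace Y] [CompleteSpace Y]
    (g : Y → ℝ) (hg : LowerSemicontinuous g) (m : ℝ) (hm : ∀ y, m ≤ g y)
    (y₀ : Y) (εk α : ℝ) (hα : 0 < α) (h₀ : g y₀ ≤ m + εk) :
    ∃ yh : Y, g yh ≤ g y₀ ∧ α * dist yh y₀ ≤ εk ∧
      ∀ u : Y, u ≠ yh → g yh < g u + α * dist u yh := by
  classical
  -- the "improvement" set
  set S : Y → Set Y := fun y => {z | g z + α * dist z y ≤ g y} with hS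
  have hSelf : ∀ y, y ∈ S y := by
    intro y; simp [hS, dist_self]
  have hne : ∀ y, Nonempty (S y) := fun y => ⟨⟨y, hSelf y⟩⟩
  set I : Y → ℝ := fun y => ⨅ z : S y, g z.1 with hI
  have hbdd : ∀ y, BddBelow (range fun z : S y => g z.1) := by
    intro y; exact ⟨m, by rintro r ⟨z, rfl⟩; exact hm _⟩
  have H : ∀ (n : ℕ) (y : Y), ∃ z, z ∈ S y ∧ g z ≤ I y + (1/2) ^ n := by
    intro n y
    haveI := hne y
    have : I y < I y + (1/2) ^ n := by
      have : (0:ℝ) < (1/2) ^ n := by positivity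
      linarith
    obtain ⟨z, hz⟩ := exists_lt_of_ciInf_lt this
    exact ⟨z.1, z.2, hz.le⟩
  set u : ℕ → Y := fun n => Nat.rec y₀ (fun n y => (H n y).choose) n with hu
  have hu0 : u 0 = y₀ := rfl
  have huS : ∀ n, u (n+1) ∈ S (u n) := fun n => (H n (u n)).choose_spec.1
  have huI : ∀ n, g (u (n+1)) ≤ I (u n) + (1/2) ^ n := fun n => (H n (u n)).choose_spec.2
  set a : ℕ → ℝ := fun n => g (u n) with ha
  have hstep : ∀ n, a (n+1) + α * dist (u (n+1)) (u n) ≤ a n := fun n => huS n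
  have hanti : Antitone a := by
    apply antitone_nat_of_succ_le
    intro n
    have := hstep n
    have hd : 0 ≤ dist (u (n+1)) (u n) := dist_nonneg
    nlinarith
  have hchain : ∀ n k, g (u (n+k)) + α * dist (u (n+k)) (u n) ≤ a n := by
    intro n k
    induction k with
    | zero => simp [dist_self, ha]
    | succ k ih =>
      have h1 := hstep (n+k)
      have htr : dist (u (n+k+1)) (u n) ≤ dist (u (n+k+1)) (u (n+k)) + dist (u (n+k)) (u n) :=
        dist_triangle _ _ _
      have : g (u (n+k+1)) + α * dist (u (n+k+1)) (u n) ≤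
          g (u (n+k+1)) + α * dist (u (n+k+1)) (u (n+k)) + α * dist (u (n+k)) (u n) := by
        nlinarith
      calc g (u (n+k+1)) + α * dist (u (n+k+1)) (u n)
          ≤ g (u (n+k+1)) + α * dist (u (n+k+1)) (u (n+k)) + α * dist (u (n+k)) (u n) := this
        _ ≤ a (n+k) + α * dist (u (n+k)) (u n) := by
            have := hstep (n+k); show _ ≤ a (n+k) + α * dist (u (n+k)) (u n); linarith
        _ ≤ a n := by
            have := ih
            have hd : 0 ≤ dist (u (n+k)) (u n) := dist_nonneg
            linarith
  have hchain' : ∀ n m', n ≤ m' → g (u m') + α * dist (u m') (u n) ≤ a n := by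
    intro n m' hnm
    obtain ⟨k, rfl⟩ := Nat.exists_eq_add_of_le hnm
    exact hchain n k
  have hbdda : BddBelow (range a) := ⟨m, by rintro r ⟨n, rfl⟩; exact hm _⟩
  set L : ℝ := ⨅ n, a n with hL
  have haL : Tendsto a atTop (𝓝 L) := tendsto_atTop_ciInf hanti hbdda
  have hLle : ∀ n, L ≤ a n := fun n => ciInf_le hbdda n
  -- Cauchy
  have hcauchy : CauchySeq u := by
    apply cauchySeq_of_le_tendsto_0 (fun n => (a n - L) / α)
    · intro n m' N hn hm'
      rcases le_total n m' with h | h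
      · have h1 := hchain' n m' h
        have h2 : L ≤ g (u m') := hLle m'
        have h3 : a n ≤ a N := hanti hn
        rw [dist_comm, le_div_iff₀ hα]
        nlinarith
      · have h1 := hchain' m' n h
        have h2 : L ≤ g (u n) := hLle n
        have h3 : a m' ≤ a N := hanti hm'
        rw [le_div_iff₀ hα]
        nlinarith
    · have : Tendsto (fun n => (a n - L) / α) atTop (𝓝 ((L - L) / α)) :=
        ((haL.sub tendsto_const_nhds).div_const α)
      simpa using this
  obtain ⟨yh, hyh⟩ := cauchySeq_tendsto_of_complete hcauchy
  have hgyL : g yh ≤ L := by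
    by_contra hc
    push_neg at hc
    set c := (L + g yh) / 2 with hcdef
    have hc1 : L < c := by rw [hcdef]; linarith
    have hc2 : c < g yh := by rw [hcdef]; linarith
    have hev : ∀ᶠ n in atTop, c < a n := hyh.eventually (hg yh c hc2)
    have : c ≤ L := ge_of_tendsto haL (hev.mono fun n h => h.le)
    linarith
  have hA : ∀ n, g yh + α * dist yh (u n) ≤ a n := by
    intro n
    have hlim : Tendsto (fun m' => a m' + α * dist (u m') (u n)) atTop
        (𝓝 (L + α * dist yh (u n))) :=
      haL.add (((continuous_id.dist continuous_const).continuousAt.tendsto.comp hyh).const_mul α)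
    have hle : L + α * dist yh (u n) ≤ a n := by
      apply le_of_tendsto hlim
      filter_upwards [eventually_ge_atTop n] with m' hm'
      exact hchain' n m' hm'
    have : g yh + α * dist yh (u n) ≤ L + α * dist yh (u n) := by linarith
    linarith
  have hA0 := hA 0
  rw [hu0] at hA0
  have hga0 : a 0 = g y₀ := by show g (u 0) = g y₀; rw [hu0]
  have hgy0 : g yh ≤ g y₀ := by
    have hd : 0 ≤ dist yh y₀ := dist_nonneg
    nlinarith
  refine ⟨yh, hgy0, ?_, ?_⟩
  · have h1 : m ≤ g yh := hm _
    have := hA0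
    rw [hga0] at this
    linarith
  · intro v hne2
    by_contra hc
    push_neg at hc
    -- hc : g v + α * dist v yh ≤ g yh
    have hvS : ∀ n, g v + α * dist v (u n) ≤ a n := by
      intro n
      have h1 := hA n
      have htr : dist v (u n) ≤ dist v yh + dist yh (u n) := dist_triangle _ _ _
      nlinarith
    have hIv : ∀ n, I (u n) ≤ g v := by
      intro n
      exact ciInf_le (hbdd (u n)) (⟨v, hvS n⟩ : S (u n))
    have han : ∀ n, a (n+1) ≤ g v + (1/2) ^ n := by
      intro n
      exact le_trans (huI n) (by have := hIv n; linarith)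
    have hLv : L ≤ g v := by
      have h1 : Tendsto (fun n => a (n+1)) atTop (𝓝 L) := haL.comp (tendsto_add_atTop_nat 1)
      have h2 : Tendsto (fun n : ℕ => g v + (1/2 : ℝ) ^ n) atTop (𝓝 (g v + 0)) :=
        tendsto_const_nhds.add (tendsto_pow_atTop_nhds_zero_of_lt_one (by norm_num) (by norm_num))
      have := le_of_tendsto_of_tendsto' h1 h2 han
      simpa using this
    have hdpos : 0 < dist v yh := dist_pos.2 hne2
    nlinarith

set_option maxHeartbeats 1000000 in
/-- Primal necessary conditions at a quasiuniform stationary point of `φ1 + φ2`. -/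
theorem stmt19 {X : Type*} [MetricSpace X] [CompleteSpace X]
    (φ1 φ2 : X → EReal) (hbot1 : ∀ x, φ1 x ≠ ⊥) (hbot2 : ∀ x, φ2 x ≠ ⊥)
    (hlsc1 : LowerSemicontinuous φ1) (hlsc2 : LowerSemicontinuous φ2)
    (x₀ : X) (hx₀1 : φ1 x₀ < ⊤) (hx₀2 : φ2 x₀ < ⊤)
    (hstat : ∀ ε : ℝ, 0 < ε → ∃ δε : ℝ, 0 < δε ∧ ∀ δ : ℝ, 0 < δ → δ < δε →
      φ1 x₀ + φ2 x₀ < lambdaDag φ1 φ2 (Metric.ball x₀ δ) + ((ε * δ : ℝ) : EReal)) :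
    ∀ ε : ℝ, 0 < ε → ∃ ρ : ℝ, 0 < ρ ∧ ρ < ε ∧ ∀ η : ℝ, 0 < η →
      ∃ γ : ℝ, 0 < γ ∧ ∃ xh1 xh2 : X,
        max (dist xh1 x₀) (dist xh2 x₀) < ρ ∧
        dist xh1 xh2 < η ∧
        φ1 xh1 + φ2 xh2 + ((γ * dist xh1 xh2 : ℝ) : EReal) ≤ φ1 x₀ + φ2 x₀ ∧
        ∀ u1 ∈ Metric.closedBall x₀ ρ, ∀ u2 ∈ Metric.closedBall x₀ ρ,
          (u1, u2) ≠ (xh1, xh2) →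
          (φ1 xh1 + φ2 xh2 + ((γ * dist xh1 xh2 : ℝ) : EReal)) -
              (φ1 u1 + φ2 u2 + ((γ * dist u1 u2 : ℝ) : EReal)) <
            ((ε * max (dist u1 xh1) (dist u2 xh2) : ℝ) : EReal) := by
  intro ε hε
  set a : ℝ := (φ1 x₀).toReal with hadef
  set b : ℝ := (φ2 x₀).toReal with hbdef
  have hφa : φ1 x₀ = ((a : ℝ) : EReal) := (EReal.coe_toReal (ne_of_lt hx₀1) (hbot1 x₀)).symm
  have hφb : φ2 x₀ = ((b : ℝ) : EReal) := (EReal.coe_toReal (ne_of_lt hx₀2) (hbot2 x₀)).symm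
  -- local lower bounds from lower semicontinuity
  have h1 : ∀ᶠ z in 𝓝 x₀, ((a - 1 : ℝ) : EReal) < φ1 z := by
    apply hlsc1 x₀
    rw [hφa]
    exact_mod_cast (by linarith : a - 1 < a)
  have h2 : ∀ᶠ z in 𝓝 x₀, ((b - 1 : ℝ) : EReal) < φ2 z := by
    apply hlsc2 x₀
    rw [hφb]
    exact_mod_cast (by linarith : b - 1 < b)
  obtain ⟨r, hrpos, hr⟩ := Metric.eventually_nhds_iff.1 (h1.and h2)
  -- stationarity at level ε/16
  obtain ⟨δε, hδεpos, hδprop⟩ := hstat (ε/16) (by positivity)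
  set δ : ℝ := min (min (δε/2) (ε/2)) (r/2) with hδdef
  have hδpos : 0 < δ := lt_min (lt_min (by linarith) (by linarith)) (by linarith)
  have hδδε : δ < δε := lt_of_le_of_lt ((min_le_left _ _).trans (min_le_left _ _)) (by linarith)
  have hδε2 : δ ≤ ε/2 := (min_le_left _ _).trans (min_le_right _ _)
  have hδr : δ ≤ r/2 := min_le_right _ _
  have hmain := hδprop δ hδpos hδδε
  set e : ℝ := ε/16 * δ with hedef
  have hepos : 0 < e := by positivity
  set ρ : ℝ := δ/4 with hρdef
  have hρpos : 0 < ρ := by positivity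
  set V : Set X := closedBall x₀ ρ with hVdef
  have hVI : EssInt (Metric.ball x₀ δ) V := by
    refine ⟨δ/2, by positivity, fun v hv z hz => ?_⟩
    rw [hVdef, mem_closedBall] at hv
    rw [mem_ball] at hz ⊢
    have htri := dist_triangle z v x₀
    rw [hρdef] at hv
    linarith
  have hdagle : lambdaDag φ1 φ2 (Metric.ball x₀ δ) ≤ lambdaCirc φ1 φ2 V :=
    iInf_le _ (⟨V, hVI⟩ : {W : Set X // EssInt (Metric.ball x₀ δ) W})
  set c' : ℝ := a + b - e with hc'def
  have hc' : (c' : EReal) < lambdaCirc φ1 φ2 V := by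
    by_contra hcon
    push_neg at hcon
    have h3 : lambdaDag φ1 φ2 (Metric.ball x₀ δ) + ((e : ℝ) : EReal) ≤
        ((c' : ℝ) : EReal) + ((e : ℝ) : EReal) :=
      add_le_add (hdagle.trans hcon) le_rfl
    have h4 : ((c' : ℝ) : EReal) + ((e : ℝ) : EReal) = ((a + b : ℝ) : EReal) := by
      rw [← EReal.coe_add]
      norm_num [hc'def]
    rw [h4] at h3
    have h5 : φ1 x₀ + φ2 x₀ = ((a + b : ℝ) : EReal) := by rw [hφa, hφb, ← EReal.coe_add]
    rw [h5] at hmain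
    exact absurd (lt_of_lt_of_le hmain h3) (lt_irrefl _)
  rw [lambdaCirc, lt_iSup_iff] at hc'
  obtain ⟨ηb, hηb⟩ := hc'
  have hbound : ∀ x1 ∈ V, ∀ x2 ∈ V, dist x1 x2 < ηb.1 → (c' : EReal) < φ1 x1 + φ2 x2 := by
    intro x1 hx1 x2 hx2 hd
    exact lt_of_lt_of_le hηb (sInf_le ⟨x1, hx1, x2, hx2, hd, rfl⟩)
  refine ⟨ρ, hρpos, by rw [hρdef]; linarith, ?_⟩
  intro η hη
  set η'' : ℝ := min η ηb.1 / 2 with hη''def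
  have hηbpos := ηb.2
  have hη''pos : 0 < η'' := by
    rw [hη''def]
    have := lt_min hη hηbpos
    linarith
  have hη''η : η'' ≤ η / 2 := by
    rw [hη''def]
    have := min_le_left η ηb.1
    linarith
  have hη''ηb : η'' < ηb.1 := by
    rw [hη''def]
    have := min_le_right η ηb.1
    linarith
  set K : ℝ := max (2*e) 3 with hKdef
  have hK3 : (3:ℝ) ≤ K := le_max_right _ _
  have hK2e : 2*e ≤ K := le_max_left _ _
  have hKpos : 0 < K := by linarith
  set γ : ℝ := K / η'' with hγdef
  have hγpos : 0 < γ := div_pos hKpos hη''pos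
  refine ⟨γ, hγpos, ?_⟩
  set Kset : Set (X × X) :=
    (closedBall x₀ ρ ×ˢ closedBall x₀ ρ) ∩ {p : X × X | dist p.1 p.2 ≤ η''} with hKsetdef
  have hKclosed : IsClosed Kset :=
    ((isClosed_closedBall.prod isClosed_closedBall)).inter
      (isClosed_le (continuous_fst.dist continuous_snd) continuous_const)
  haveI : CompleteSpace Kset := hKclosed.completeSpace_coe
  set f : X × X → EReal := fun p => φ1 p.1 + φ2 p.2 + ((γ * dist p.1 p.2 : ℝ) : EReal) with hfdef
  have hfne_bot : ∀ p, f p ≠ ⊥ := by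
    intro p h
    rw [hfdef] at h
    simp only [EReal.add_eq_bot_iff] at h
    rcases h with (h | h) | h
    exacts [hbot1 _ h, hbot2 _ h, EReal.coe_ne_bot _ h]
  have hsum_ne_bot : ∀ p : X × X, φ1 p.1 + φ2 p.2 ≠ ⊥ := by
    intro p h
    rcases EReal.add_eq_bot_iff.1 h with h | h
    exacts [hbot1 _ h, hbot2 _ h]
  have hflsc : LowerSemicontinuous f := by
    have l1 : LowerSemicontinuous (fun p : X × X => φ1 p.1) :=
      LowerSemicontinuous.comp hlsc1 continuous_fst
    have l2 : LowerSemicontinuous (fun p : X × X => φ2 p.2) :=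
      LowerSemicontinuous.comp hlsc2 continuous_snd
    have l12 : LowerSemicontinuous (fun p : X × X => φ1 p.1 + φ2 p.2) :=
      l1.add' l2 (fun p => EReal.continuousAt_add (Or.inr (hbot2 _)) (Or.inl (hbot1 _)))
    have l3 : LowerSemicontinuous (fun p : X × X => ((γ * dist p.1 p.2 : ℝ) : EReal)) :=
      (continuous_coe_real_ereal.comp
        (continuous_const.mul (continuous_fst.dist continuous_snd))).lowerSemicontinuous
    exact l12.add' l3 (fun p =>
      EReal.continuousAt_add (Or.inr (EReal.coe_ne_bot _)) (Or.inl (hsum_ne_bot p)))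
  have hfm : ∀ p : Kset, (c' : EReal) ≤ f p.1 := by
    rintro ⟨⟨p1, p2⟩, hp⟩
    obtain ⟨⟨hp1, hp2⟩, hpd⟩ := hp
    have hVb := hbound p1 hp1 p2 hp2 (lt_of_le_of_lt hpd hη''ηb)
    have h0 : (0 : EReal) ≤ ((γ * dist p1 p2 : ℝ) : EReal) := by
      exact_mod_cast mul_nonneg hγpos.le dist_nonneg
    calc (c' : EReal) ≤ φ1 p1 + φ2 p2 := hVb.le
      _ ≤ φ1 p1 + φ2 p2 + ((γ * dist p1 p2 : ℝ) : EReal) := le_add_of_nonneg_right h0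
  set C : ℝ := a + b + 1 with hCdef
  have hc'C : c' ≤ C := by rw [hc'def, hCdef]; linarith
  set g : Kset → ℝ := fun p => (min (f p.1) ((C : ℝ) : EReal)).toReal with hgdef
  have hminne : ∀ p : Kset, min (f p.1) ((C : ℝ) : EReal) ≠ ⊥ ∧
      min (f p.1) ((C : ℝ) : EReal) ≠ ⊤ := by
    intro p
    constructor
    · have hb1 : (⊥ : EReal) < f p.1 := bot_lt_iff_ne_bot.2 (hfne_bot _)
      have hb2 : (⊥ : EReal) < ((C : ℝ) : EReal) := bot_lt_iff_ne_bot.2 (EReal.coe_ne_bot _)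
      exact (lt_min hb1 hb2).ne'
    · exact ne_top_of_le_ne_top (EReal.coe_ne_top C) (min_le_right _ _)
  have hgm : ∀ p : Kset, c' ≤ g p := by
    intro p
    have h1 : ((c' : ℝ) : EReal) ≤ min (f p.1) ((C : ℝ) : EReal) :=
      le_min (hfm p) (by exact_mod_cast hc'C)
    have := EReal.toReal_le_toReal h1 (EReal.coe_ne_bot _) (hminne p).2
    simpa using this
  have hglsc : LowerSemicontinuous g := by
    intro p y hy
    have hne := hminne p
    have hy' : ((y : ℝ) : EReal) < min (f p.1) ((C : ℝ) : EReal) := by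
      rw [← EReal.coe_toReal hne.2 hne.1]
      exact_mod_cast hy
    have hyf : ((y : ℝ) : EReal) < f p.1 := hy'.trans_le (min_le_left _ _)
    have hyC : ((y : ℝ) : EReal) < ((C : ℝ) : EReal) := hy'.trans_le (min_le_right _ _)
    have hflsc' : LowerSemicontinuous (fun q : Kset => f q.1) :=
      LowerSemicontinuous.comp hflsc continuous_subtype_val
    filter_upwards [hflsc' p _ hyf] with q hq
    have hminq : ((y : ℝ) : EReal) < min (f q.1) ((C : ℝ) : EReal) := lt_min hq hyC
    rw [← EReal.coe_toReal (hminne q).2 (hminne q).1] at hminq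
    exact_mod_cast hminq
  have hx₀K : ((x₀, x₀) : X × X) ∈ Kset := by
    constructor
    · exact ⟨mem_closedBall_self hρpos.le, mem_closedBall_self hρpos.le⟩
    · show dist x₀ x₀ ≤ η''
      rw [dist_self]
      exact hη''pos.le
  set y₀ : Kset := ⟨(x₀, x₀), hx₀K⟩ with hy₀def
  have hfy₀ : f (x₀, x₀) = ((a + b : ℝ) : EReal) := by
    show φ1 x₀ + φ2 x₀ + ((γ * dist x₀ x₀ : ℝ) : EReal) = _
    rw [hφa, hφb, dist_self, mul_zero, ← EReal.coe_add, ← EReal.coe_add]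
    norm_num
  have hgy₀ : g y₀ = a + b := by
    show (min (f (x₀, x₀)) ((C : ℝ) : EReal)).toReal = a + b
    rw [hfy₀, min_eq_left (by exact_mod_cast (by rw [hCdef]; linarith : a + b ≤ C))]
    exact EReal.toReal_coe _
  have h₀ : g y₀ ≤ c' + e := by rw [hgy₀, hc'def]; linarith
  obtain ⟨yh, hyh1, hyh2, hyh3⟩ := myEkeland g hglsc c' hgm y₀ e (ε/2) (by positivity) h₀
  rw [hgy₀] at hyh1
  -- the value of f at yh is real and equals g yh
  have hfyh_le : f yh.1 ≤ ((C : ℝ) : EReal) := by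
    by_contra hcon
    push_neg at hcon
    have hminC : min (f yh.1) ((C : ℝ) : EReal) = ((C : ℝ) : EReal) := min_eq_right hcon.le
    have hgC : g yh = C := by
      show (min (f yh.1) ((C : ℝ) : EReal)).toReal = C
      rw [hminC]
      simp
    rw [hgC, hCdef] at hyh1
    linarith
  have hfyh : f yh.1 = ((g yh : ℝ) : EReal) := by
    have hmin : min (f yh.1) ((C : ℝ) : EReal) = f yh.1 := min_eq_left hfyh_le
    show _ = (((min (f yh.1) ((C : ℝ) : EReal)).toReal : ℝ) : EReal)
    rw [hmin, EReal.coe_toReal (ne_top_of_le_ne_top (EReal.coe_ne_top C) hfyh_le) (hfne_bot _)]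
  have htopcomp : ∀ q : X × X, f q ≠ ⊤ → φ1 q.1 ≠ ⊤ ∧ φ2 q.2 ≠ ⊤ := by
    intro q hq
    constructor
    · intro h
      apply hq
      show φ1 q.1 + φ2 q.2 + ((γ * dist q.1 q.2 : ℝ) : EReal) = ⊤
      rw [h, EReal.top_add_of_ne_bot (hbot2 _), EReal.top_add_of_ne_bot (EReal.coe_ne_bot _)]
    · intro h
      apply hq
      show φ1 q.1 + φ2 q.2 + ((γ * dist q.1 q.2 : ℝ) : EReal) = ⊤
      rw [h, EReal.add_top_of_ne_bot (hbot1 _), EReal.top_add_of_ne_bot (EReal.coe_ne_bot _)]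
  have hreal : ∀ q : X × X, f q ≠ ⊤ → ∃ A1 A2 : ℝ, φ1 q.1 = ((A1 : ℝ) : EReal) ∧
      φ2 q.2 = ((A2 : ℝ) : EReal) ∧ f q = ((A1 + A2 + γ * dist q.1 q.2 : ℝ) : EReal) := by
    intro q hq
    obtain ⟨ht1, ht2⟩ := htopcomp q hq
    refine ⟨(φ1 q.1).toReal, (φ2 q.2).toReal, (EReal.coe_toReal ht1 (hbot1 _)).symm,
      (EReal.coe_toReal ht2 (hbot2 _)).symm, ?_⟩
    show φ1 q.1 + φ2 q.2 + ((γ * dist q.1 q.2 : ℝ) : EReal) = _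
    rw [← EReal.coe_toReal ht1 (hbot1 _), ← EReal.coe_toReal ht2 (hbot2 _),
      ← EReal.coe_add, ← EReal.coe_add]
    simp [EReal.toReal_coe]
  obtain ⟨A1, A2, hA1, hA2, hAeq⟩ := hreal yh.1 (by rw [hfyh]; exact EReal.coe_ne_top _)
  set F : ℝ := g yh with hFdef
  have hFab : F ≤ a + b := hyh1
  have hFc' : c' ≤ F := hgm yh
  have hAF : A1 + A2 + γ * dist yh.1.1 yh.1.2 = F := by
    have := hAeq.symm.trans hfyh
    exact_mod_cast this
  -- membership facts for yh
  obtain ⟨⟨hyh1b, hyh2b⟩, hyhd⟩ := yh.2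
  have hsumyh : c' < A1 + A2 := by
    have := hbound yh.1.1 hyh1b yh.1.2 hyh2b (lt_of_le_of_lt hyhd hη''ηb)
    rw [hA1, hA2, ← EReal.coe_add] at this
    exact_mod_cast this
  have hγd : γ * dist yh.1.1 yh.1.2 < e := by
    rw [hc'def] at hsumyh
    linarith
  have hd12 : dist yh.1.1 yh.1.2 < η'' / 2 := by
    have hKd : K * dist yh.1.1 yh.1.2 < e * η'' := by
      rw [hγdef, div_mul_eq_mul_div, div_lt_iff₀ hη''pos] at hγd
      linarith
    nlinarith [dist_nonneg (x := yh.1.1) (y := yh.1.2)]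
  -- distance of yh from the base point
  have hdyh : dist yh y₀ ≤ ρ / 2 := by
    have h := hyh2
    rw [hedef] at h
    rw [hρdef]
    nlinarith [dist_nonneg (x := yh) (y := y₀)]
  have hdyh' : max (dist yh.1.1 x₀) (dist yh.1.2 x₀) ≤ ρ / 2 := by
    have h := hdyh
    rw [Subtype.dist_eq, hy₀def] at h
    rw [Prod.dist_eq] at h
    exact h
  refine ⟨yh.1.1, yh.1.2, ?_, ?_, ?_, ?_⟩
  · exact lt_of_le_of_lt hdyh' (by linarith)
  · calc dist yh.1.1 yh.1.2 < η'' / 2 := hd12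
      _ < η := by linarith
  · show f yh.1 ≤ φ1 x₀ + φ2 x₀
    rw [hfyh, hφa, hφb, ← EReal.coe_add]
    exact_mod_cast hFab
  · intro u1 hu1 u2 hu2 hneq
    set D : ℝ := max (dist u1 yh.1.1) (dist u2 yh.1.2) with hDdef
    have hDpos : 0 < D := by
      by_contra hD
      push_neg at hD
      have h1 : dist u1 yh.1.1 ≤ 0 := le_trans (le_max_left _ _) hD
      have h2 : dist u2 yh.1.2 ≤ 0 := le_trans (le_max_right _ _) hD
      have e1 : u1 = yh.1.1 := by
        have := dist_nonneg (x := u1) (y := yh.1.1)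
        exact dist_le_zero.1 (le_antisymm h1 this).le
      have e2 : u2 = yh.1.2 := by
        have := dist_nonneg (x := u2) (y := yh.1.2)
        exact dist_le_zero.1 (le_antisymm h2 this).le
      exact hneq (by rw [e1, e2])
    show f yh.1 - f (u1, u2) < ((ε * D : ℝ) : EReal)
    by_cases hutop : f (u1, u2) = ⊤
    · rw [hutop, hfyh]
      rw [EReal.sub_top]
      exact bot_lt_iff_ne_bot.2 (EReal.coe_ne_bot _)
    · obtain ⟨B1, B2, hB1, hB2, hBeq⟩ := hreal (u1, u2) hutop
      rw [hfyh, hBeq, ← EReal.coe_sub]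
      rw [EReal.coe_lt_coe_iff]
      rcases le_or_gt (dist u1 u2) η'' with hcase | hcase
      · -- near pair: use Ekeland
        have huK : ((u1, u2) : X × X) ∈ Kset := ⟨⟨hu1, hu2⟩, hcase⟩
        have hune : (⟨(u1, u2), huK⟩ : Kset) ≠ yh := by
          intro h
          apply hneq
          have := congrArg Subtype.val h
          simp only at this
          rw [this]
        have hek := hyh3 _ hune
        have hgu : g (⟨(u1, u2), huK⟩ : Kset) ≤ B1 + B2 + γ * dist u1 u2 := by
          show (min (f (u1, u2)) ((C : ℝ) : EReal)).toReal ≤ _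
          have : min (f (u1, u2)) ((C : ℝ) : EReal) ≤ f (u1, u2) := min_le_left _ _
          have h2 := EReal.toReal_le_toReal this (hminne ⟨(u1, u2), huK⟩).1
            (by rw [hBeq]; exact EReal.coe_ne_top _)
          calc (min (f (u1, u2)) ((C : ℝ) : EReal)).toReal ≤ (f (u1, u2)).toReal := h2
            _ = B1 + B2 + γ * dist u1 u2 := by rw [hBeq, EReal.toReal_coe]
        have hdist : dist (⟨(u1, u2), huK⟩ : Kset) yh = D := by
          rw [Subtype.dist_eq, Prod.dist_eq]
        rw [hdist] at hek
        have : F < B1 + B2 + γ * dist u1 u2 + ε/2 * D := by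
          calc F = g yh := rfl
            _ < g (⟨(u1, u2), huK⟩ : Kset) + ε/2 * D := hek
            _ ≤ B1 + B2 + γ * dist u1 u2 + ε/2 * D := by linarith
        nlinarith
      · -- far pair: the penalty term dominates
        have hB1b : a - 1 < B1 := by
          have hu1r : dist u1 x₀ < r := by
            rw [mem_closedBall] at hu1
            rw [hρdef] at hu1
            linarith
          have := (hr hu1r).1
          rw [hB1] at this
          exact_mod_cast this
        have hB2b : b - 1 < B2 := by
          have hu2r : dist u2 x₀ < r := by
            rw [mem_closedBall] at hu2
            rw [hρdef] at hu2
            linarith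
          have := (hr hu2r).2
          rw [hB2] at this
          exact_mod_cast this
        have hpen : K ≤ γ * dist u1 u2 := by
          rw [hγdef]
          rw [div_mul_eq_mul_div, le_div_iff₀ hη''pos]
          nlinarith
        have hεD : 0 ≤ ε * D := by positivity
        nlinarith
end
end
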